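/- The bilinear antisymmetric bracket on R^4 with basis {u1, u2, u3, u4} determined by [u1, u3] = −u2, [u1, u4] = −u1, [u2, u4] = 3·u2, [u3, u4] = 4·u3, and all other basis brackets zero, satisfies the Jacobi identity, and the resulting Lie algebra is solvable but not nilpotent. -/

import Mathlib

noncomputable section

/-- The standard basis `u1, u2, u3, u4` of `ℝ⁴`. -/
def e4 (i : Fin 4) : Fin 4 → ℝ := Pi.single i 1

/-- The brackets `[u1,u3] = -u2`, `[u1,u4] = -u1`, `[u2,u4] = 3u2`, `[u3,u4] = 4u3`
satisfy the Jacobi identity, and the resulting Lie algebra is solvable but not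
nilpotent. -/
theorem caseLiii_solvable_not_nilpotent :
    (∀ B : (Fin 4 → ℝ) →ₗ[ℝ] (Fin 4 → ℝ) →ₗ[ℝ] (Fin 4 → ℝ),
      (∀ X Y, B X Y = - B Y X) →
      B (e4 0) (e4 2) = -(e4 1) →
      B (e4 0) (e4 3) = -(e4 0) →
      B (e4 1) (e4 3) = (3 : ℝ) • e4 1 →
      B (e4 2) (e4 3) = (4 : ℝ) • e4 2 →
      B (e4 0) (e4 1) = 0 → B (e4 1) (e4 2) = 0 →
      ∀ X Y Z, B (B X Y) Z + B (B Y Z) X + B (B Z X) Y = 0) ∧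
    (∀ (L : Type) [LieRing L] [LieAlgebra ℝ L] (b : Module.Basis (Fin 4) ℝ L),
      ⁅b 0, b 2⁆ = -(b 1) → ⁅b 0, b 3⁆ = -(b 0) →
      ⁅b 1, b 3⁆ = (3 : ℝ) • b 1 → ⁅b 2, b 3⁆ = (4 : ℝ) • b 2 →
      ⁅b 0, b 1⁆ = 0 → ⁅b 1, b 2⁆ = 0 →
      LieAlgebra.IsSolvable L ∧ ¬ LieModule.IsNilpotent L L) := by
  constructor
  · -- Jacobi identity
    intro B hskew h02 h03 h13 h23 h01 h12
    have hXX : ∀ X, B X X = 0 := by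
      intro X
      have h := hskew X X
      have h2 : (2 : ℝ) • B X X = 0 := by
        rw [two_smul]; nth_rewrite 1 [h]; rw [neg_add_cancel]
      have := smul_eq_zero.mp h2
      simpa using this
    have h20 : B (e4 2) (e4 0) = e4 1 := by rw [hskew, h02, neg_neg]
    have h30 : B (e4 3) (e4 0) = e4 0 := by rw [hskew, h03, neg_neg]
    have h31 : B (e4 3) (e4 1) = -((3 : ℝ) • e4 1) := by rw [hskew, h13]
    have h32 : B (e4 3) (e4 2) = -((4 : ℝ) • e4 2) := by rw [hskew, h23]
    have h10 : B (e4 1) (e4 0) = 0 := by rw [hskew, h01, neg_zero]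
    have h21 : B (e4 2) (e4 1) = 0 := by rw [hskew, h12, neg_zero]
    have h00 := hXX (e4 0)
    have h11 := hXX (e4 1)
    have h22 := hXX (e4 2)
    have h33 := hXX (e4 3)
    -- the trilinear Jacobi map
    set C : (Fin 4 → ℝ) →ₗ[ℝ] (Fin 4 → ℝ) →ₗ[ℝ] (Fin 4 → ℝ) →ₗ[ℝ] (Fin 4 → ℝ) :=
      LinearMap.compr₂ B B with hC
    set T : (Fin 4 → ℝ) →ₗ[ℝ] (Fin 4 → ℝ) →ₗ[ℝ] (Fin 4 → ℝ) →ₗ[ℝ] (Fin 4 → ℝ) :=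
      C + (LinearMap.lflip.toLinearMap ∘ₗ C).flip + LinearMap.lflip.toLinearMap ∘ₗ C.flip with hT
    have hTapp : ∀ X Y Z, T X Y Z = B (B X Y) Z + B (B Y Z) X + B (B Z X) Y := by
      intro X Y Z
      simp [hT, hC, LinearMap.lflip_apply, LinearMap.compr₂_apply]
    have hT0 : T = 0 := by
      apply (Pi.basisFun ℝ (Fin 4)).ext; intro i
      apply (Pi.basisFun ℝ (Fin 4)).ext; intro j
      apply (Pi.basisFun ℝ (Fin 4)).ext; intro k
      have hb : ∀ i : Fin 4, Pi.basisFun ℝ (Fin 4) i = e4 i := by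
        intro i; simp [e4]
      rw [hb, hb, hb]
      simp only [LinearMap.zero_apply, hTapp]
      fin_cases i <;> fin_cases j <;> fin_cases k <;>
        simp only [Fin.zero_eta, Fin.mk_one, Fin.reduceFinMk, Fin.isValue, h00, h11, h22, h33, h01, h02, h03, h10, h12, h13, h20,
          h21, h23, h30, h31, h32, map_neg, map_smul, map_zero, LinearMap.neg_apply,
          LinearMap.smul_apply, LinearMap.zero_apply] <;>
        module
    intro X Y Z
    rw [← hTapp, hT0]
    simp
  · -- solvable, not nilpotent
    intro L _ _ b h02 h03 h13 h23 h01 h12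
    have h20 : ⁅b 2, b 0⁆ = b 1 := by rw [← lie_skew, h02, neg_neg]
    have h30 : ⁅b 3, b 0⁆ = b 0 := by rw [← lie_skew, h03, neg_neg]
    have h31 : ⁅b 3, b 1⁆ = -((3 : ℝ) • b 1) := by rw [← lie_skew, h13]
    have h32 : ⁅b 3, b 2⁆ = -((4 : ℝ) • b 2) := by rw [← lie_skew, h23]
    have h10 : ⁅b 1, b 0⁆ = 0 := by rw [← lie_skew, h01, neg_zero]
    have h21 : ⁅b 2, b 1⁆ = 0 := by rw [← lie_skew, h12, neg_zero]
    -- the submodule spanned by b0, b1, b2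
    set S : Submodule ℝ L := Submodule.span ℝ {b 0, b 1, b 2} with hS
    have m0 : b 0 ∈ S := Submodule.subset_span (by simp)
    have m1 : b 1 ∈ S := Submodule.subset_span (by simp)
    have m2 : b 2 ∈ S := Submodule.subset_span (by simp)
    have hbbS : ∀ i j : Fin 4, ⁅b i, b j⁆ ∈ S := by
      intro i j
      fin_cases i <;> fin_cases j <;>
        simp only [Fin.zero_eta, Fin.mk_one, Fin.reduceFinMk, Fin.isValue, lie_self, h01, h02, h03, h10, h12, h13, h20, h21, h23,
          h30, h31, h32] <;>
        first
          | exact S.zero_mem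
          | exact m0
          | exact m1
          | exact S.neg_mem m0
          | exact S.neg_mem m1
          | exact S.smul_mem _ m1
          | exact S.smul_mem _ m2
          | exact S.neg_mem (S.smul_mem _ m1)
          | exact S.neg_mem (S.smul_mem _ m2)
    -- any bracket lies in S
    have hbr : ∀ x y : L, ⁅x, y⁆ ∈ S := by
      have hx : ∀ x : L, x ∈ Submodule.span ℝ (Set.range b) := fun x => by
        rw [b.span_eq]; trivial
      intro x y
      induction hx x using Submodule.span_induction with
      | mem u hu =>
        obtain ⟨i, rfl⟩ := hu
        induction hx y using Submodule.span_induction with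
        | mem v hv => obtain ⟨j, rfl⟩ := hv; exact hbbS i j
        | zero => simpa using S.zero_mem
        | add v w _ _ hv hw => rw [lie_add]; exact S.add_mem hv hw
        | smul c v _ hv => rw [lie_smul]; exact S.smul_mem c hv
      | zero => simpa using S.zero_mem
      | add u v _ _ hu hv => rw [add_lie]; exact S.add_mem hu hv
      | smul c u _ hu => rw [smul_lie]; exact S.smul_mem c hu
    -- S and span {b 1} are Lie ideals
    set I₁ : LieIdeal ℝ L := { toSubmodule := S, lie_mem := fun {x m} _ => hbr x m } with hI₁
    set S₂ : Submodule ℝ L := Submodule.span ℝ {b 1} with hS₂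
    have m1' : b 1 ∈ S₂ := Submodule.subset_span (by simp)
    have hbr2 : ∀ x : L, ⁅x, b 1⁆ ∈ S₂ := by
      have hx : ∀ x : L, x ∈ Submodule.span ℝ (Set.range b) := fun x => by
        rw [b.span_eq]; trivial
      intro x
      induction hx x using Submodule.span_induction with
      | mem u hu =>
        obtain ⟨i, rfl⟩ := hu
        fin_cases i <;>
          simp only [Fin.zero_eta, Fin.mk_one, Fin.reduceFinMk, Fin.isValue, lie_self, h01, h21, h31] <;>
          first
            | exact S₂.zero_mem
            | exact S₂.neg_mem (S₂.smul_mem _ m1')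
      | zero => simpa using S₂.zero_mem
      | add u v _ _ hu hv => rw [add_lie]; exact S₂.add_mem hu hv
      | smul c u _ hu => rw [smul_lie]; exact S₂.smul_mem c hu
    have hbr2' : ∀ (x m : L), m ∈ S₂ → ⁅x, m⁆ ∈ S₂ := by
      intro x m hm
      induction hm using Submodule.span_induction with
      | mem u hu => simp only [Set.mem_singleton_iff] at hu; subst hu; exact hbr2 x
      | zero => simpa using S₂.zero_mem
      | add u v _ _ hu hv => rw [lie_add]; exact S₂.add_mem hu hv
      | smul c u _ hu => rw [lie_smul]; exact S₂.smul_mem c hu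
    set I₂ : LieIdeal ℝ L := { toSubmodule := S₂, lie_mem := fun {x m} hm => hbr2' x m hm }
      with hI₂
    constructor
    · -- solvable
      -- D1 ≤ I₁
      have hD1 : LieAlgebra.derivedSeries ℝ L 1 ≤ I₁ := by
        show LieAlgebra.derivedSeriesOfIdeal ℝ L (0 + 1) ⊤ ≤ I₁
        rw [LieAlgebra.derivedSeriesOfIdeal_succ]
        rw [LieSubmodule.lieIdeal_oper_eq_span, LieSubmodule.lieSpan_le]
        rintro z ⟨x, y, rfl⟩
        exact hbr x y
      -- brackets of elements of I₁ lie in I₂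
      have hI₁I₂ : ∀ x ∈ S, ∀ y ∈ S, ⁅x, y⁆ ∈ S₂ := by
        have base : ∀ u ∈ ({b 0, b 1, b 2} : Set L), ∀ v ∈ ({b 0, b 1, b 2} : Set L),
            ⁅u, v⁆ ∈ S₂ := by
          intro u hu v hv
          simp only [Set.mem_insert_iff, Set.mem_singleton_iff] at hu hv
          rcases hu with rfl | rfl | rfl <;> rcases hv with rfl | rfl | rfl <;>
            simp only [Fin.isValue, lie_self, h01, h02, h10, h12, h20, h21] <;>
            first
              | exact S₂.zero_mem
              | exact m1'
              | exact S₂.neg_mem m1'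
        intro x hx
        induction hx using Submodule.span_induction with
        | mem u hu =>
          intro y hy
          induction hy using Submodule.span_induction with
          | mem v hv => exact base u hu v hv
          | zero => simpa using S₂.zero_mem
          | add v w _ _ hv hw => rw [lie_add]; exact S₂.add_mem hv hw
          | smul c v _ hv => rw [lie_smul]; exact S₂.smul_mem c hv
        | zero => intro y _; simpa using S₂.zero_mem
        | add u v _ _ hu hv => intro y hy; rw [add_lie]; exact S₂.add_mem (hu y hy) (hv y hy)
        | smul c u _ hu => intro y hy; rw [smul_lie]; exact S₂.smul_mem c (hu y hy)
      have hD2 : LieAlgebra.derivedSeries ℝ L 2 ≤ I₂ := by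
        have : LieAlgebra.derivedSeries ℝ L 2 ≤ ⁅I₁, I₁⁆ := by
          show LieAlgebra.derivedSeriesOfIdeal ℝ L (1 + 1) ⊤ ≤ _
          rw [LieAlgebra.derivedSeriesOfIdeal_succ]
          exact LieSubmodule.mono_lie hD1 hD1
        refine le_trans this ?_
        rw [LieSubmodule.lieIdeal_oper_eq_span, LieSubmodule.lieSpan_le]
        rintro z ⟨⟨x, hx⟩, ⟨y, hy⟩, rfl⟩
        exact hI₁I₂ x hx y hy
      have hI₂I₂ : ∀ x ∈ S₂, ∀ y ∈ S₂, ⁅x, y⁆ = 0 := by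
        have base : ∀ u ∈ ({b 1} : Set L), ∀ v ∈ ({b 1} : Set L), ⁅u, v⁆ = (0 : L) := by
          intro u hu v hv
          simp only [Set.mem_singleton_iff] at hu hv
          subst hu; subst hv; exact lie_self _
        intro x hx
        induction hx using Submodule.span_induction with
        | mem u hu =>
          intro y hy
          induction hy using Submodule.span_induction with
          | mem v hv => exact base u hu v hv
          | zero => simp
          | add v w _ _ hv hw => rw [lie_add, hv, hw, add_zero]
          | smul c v _ hv => rw [lie_smul, hv, smul_zero]
        | zero => intro y _; simp
        | add u v _ _ hu hv => intro y hy; rw [add_lie, hu y hy, hv y hy, add_zero]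
        | smul c u _ hu => intro y hy; rw [smul_lie, hu y hy, smul_zero]
      have hD3 : LieAlgebra.derivedSeries ℝ L 3 = ⊥ := by
        rw [eq_bot_iff]
        have : LieAlgebra.derivedSeries ℝ L 3 ≤ ⁅I₂, I₂⁆ := by
          show LieAlgebra.derivedSeriesOfIdeal ℝ L (2 + 1) ⊤ ≤ _
          rw [LieAlgebra.derivedSeriesOfIdeal_succ]
          exact LieSubmodule.mono_lie hD2 hD2
        refine le_trans this ?_
        rw [LieSubmodule.lieIdeal_oper_eq_span, LieSubmodule.lieSpan_le]
        rintro z ⟨⟨x, hx⟩, ⟨y, hy⟩, rfl⟩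
        have := hI₂I₂ x hx y hy
        simp only [this]
        exact (⊥ : LieIdeal ℝ L).zero_mem
      exact LieAlgebra.IsSolvable.mk hD3
    · -- not nilpotent
      intro hnil
      obtain ⟨k, hk⟩ := (LieModule.isNilpotent_iff ℝ L L).mp hnil
      have hb0 : ∀ n, b 0 ∈ LieModule.lowerCentralSeries ℝ L L n := by
        intro n
        induction n with
        | zero => simp [LieModule.lowerCentralSeries_zero]
        | succ n ih =>
          rw [LieModule.lowerCentralSeries_succ]
          have : b 0 = ⁅b 3, b 0⁆ := by rw [h30]
          rw [this]
          exact LieSubmodule.lie_mem_lie (LieSubmodule.mem_top _) ih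
      have := hb0 k
      rw [hk] at this
      exact b.ne_zero 0 ((LieSubmodule.mem_bot _).mp this)
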